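/- Fix a positive integer n. Let k be a positive integer and let u_1,…,u_{k−1} ∈ M be monomials such that each u_i either lies in yZ ∩ Zy or equals y. Then the ℤ-linear map on Z(k) defined on monomials by [a_1,…,a_k] ↦ x^{a_1} u_1 x^{a_2} u_2 x^{a_3} ⋯ u_{k−1} x^{a_k} maps B ∩ Z(k) into B. -/

import Mathlib

/-!
The free non-unital associative ring `Z = ℤ⟨x,y⟩⁺`, realized as the span of the
non-empty monomials inside the free (unital) algebra `W = ℤ⟨x,y⟩`, together with the
`ℤ`-submodule `B` from Section 3 of the paper.
-/

/-- The free unital associative `ℤ`-algebra `W = ℤ⟨x,y⟩` on two generators. -/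
abbrev W : Type := FreeAlgebra ℤ (Fin 2)

/-- The generator `x`. -/
noncomputable def Xg : W := FreeAlgebra.ι ℤ (0 : Fin 2)

/-- The generator `y`. -/
noncomputable def Yg : W := FreeAlgebra.ι ℤ (1 : Fin 2)

/-- `w` is a non-empty monomial (word) in `x, y`, i.e. `w ∈ M`. -/
def IsMonoW (w : W) : Prop :=
  ∃ l : List (Fin 2), l ≠ [] ∧ w = (l.map (FreeAlgebra.ι ℤ)).prod

/-- `Z = ℤ⟨x,y⟩⁺`, the free non-unital associative ring on `x, y`: the `ℤ`-span of the
non-empty monomials inside `W`. -/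
noncomputable def Zsub : Submodule ℤ W := Submodule.span ℤ {w | IsMonoW w}

/-- `[a_1,…,a_k] = x^{a_1} y x^{a_2} y ⋯ y x^{a_k}` (for `k = 0` this is `1`). -/
noncomputable def br {k : ℕ} (a : Fin k → ℕ) : W :=
  (List.intersperse Yg (List.ofFn fun i => Xg ^ (a i))).prod

/-- The `ℤ`-submodule `B` of `Z`: it is generated by the monomials `[a_1,…,a_k]`
(`k ≥ 1`) such that `a_i ≥ n` for some `i`, or `a_i = a_j` for some `i ≠ j`, together
with the elements `[a_1,…,a_k] + [a_1,…,a_k]^{(ij)}` for transpositions `(ij)`,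
`i ≠ j`. -/
noncomputable def Bsub (n : ℕ) : Submodule ℤ W :=
  Submodule.span ℤ
    ({w | ∃ (k : ℕ) (a : Fin k → ℕ), 0 < k ∧
        ((∃ i, n ≤ a i) ∨ ∃ i j : Fin k, i ≠ j ∧ a i = a j) ∧ w = br a} ∪
      {w | ∃ (k : ℕ) (a : Fin k → ℕ) (i j : Fin k), i ≠ j ∧
        w = br a + br (a ∘ Equiv.swap i j)})

/-- `Z(k)`: the `ℤ`-span of the monomials whose total degree in `y` is `k−1`, i.e. of
the words `[a_1,…,a_k]`, `a ∈ ℕ₀^k`. -/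
noncomputable def Zk (k : ℕ) : Submodule ℤ W :=
  Submodule.span ℤ {w | ∃ a : Fin k → ℕ, w = br a}

/-- The alternating product `w_1 s_1 w_2 s_2 ⋯`: multiply the entries of the first list
interleaved with the entries of the second list (of separators). -/
noncomputable def interleave : List W → List W → W
  | [], _ => 1
  | w :: _, [] => w
  | w :: ws, s :: ss => w * s * interleave ws ss

/-- `x^{a_1} u_1 x^{a_2} u_2 ⋯ u_{k−1} x^{a_k}`. -/
noncomputable def altWord {k : ℕ} (a : Fin k → ℕ) (u : Fin (k - 1) → W) : W :=
  interleave (List.ofFn fun i => Xg ^ (a i)) (List.ofFn u)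

/-! ### brl -/

noncomputable def brl (L : List ℕ) : W :=
  (List.intersperse Yg (L.map (Xg ^ ·))).prod

lemma br_eq_brl {k : ℕ} (a : Fin k → ℕ) : br a = brl (List.ofFn a) := by
  simp [br, brl, List.map_ofFn]
  rfl

lemma brl_nil : brl [] = 1 := rfl

lemma brl_single (a : ℕ) : brl [a] = Xg ^ a := by simp [brl]

lemma brl_cons (a : ℕ) {L : List ℕ} (h : L ≠ []) :
    brl (a :: L) = Xg ^ a * (Yg * brl L) := by
  obtain ⟨b, t, rfl⟩ := List.exists_cons_of_ne_nil h
  simp [brl, List.intersperse_cons_cons, mul_assoc]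

lemma brl_append {L1 L2 : List ℕ} (h1 : L1 ≠ []) (h2 : L2 ≠ []) :
    brl (L1 ++ L2) = brl L1 * (Yg * brl L2) := by
  induction L1 with
  | nil => exact absurd rfl h1
  | cons a t ih =>
    cases t with
    | nil => rw [List.singleton_append, brl_cons _ h2, brl_single]
    | cons b s =>
        rw [List.cons_append, brl_cons a (by simp), brl_cons a (L := b :: s) (by simp),
          ih (by simp)]
        simp [mul_assoc]

lemma brl_append_zero (m : List ℕ) {L : List ℕ} (hL : L ≠ []) :
    brl (m ++ [0]) * brl L = brl (m ++ L) := by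
  cases m with
  | nil => simp [brl_single]
  | cons a t =>
      rw [brl_append (by simp) (L2 := [0]) (by simp), brl_single, pow_zero, mul_one,
        brl_append (by simp) hL, mul_assoc]

/-! ### letters -/

def lettersL : List ℕ → List (Fin 2)
  | [] => []
  | [a] => List.replicate a 0
  | a :: b :: t => List.replicate a 0 ++ 1 :: lettersL (b :: t)

lemma prod_replicate_X (a : ℕ) :
    ((List.replicate a (0 : Fin 2)).map (FreeAlgebra.ι ℤ)).prod = Xg ^ a := by
  simp [List.map_replicate, List.prod_replicate, Xg]

lemma brl_eq_prod : ∀ (L : List ℕ), L ≠ [] →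
    brl L = ((lettersL L).map (FreeAlgebra.ι ℤ)).prod
  | [], h => absurd rfl h
  | [a], _ => by rw [brl_single, lettersL, prod_replicate_X]
  | a :: b :: t, _ => by
      rw [brl_cons a (by simp), lettersL, List.map_append, List.prod_append,
        prod_replicate_X, List.map_cons, List.prod_cons, ← brl_eq_prod (b :: t) (by simp)]
      rfl

lemma count_lettersL : ∀ (L : List ℕ), (lettersL L).count 1 = L.length - 1
  | [] => rfl
  | [a] => by simp [lettersL, List.count_replicate]
  | a :: b :: t => by
      rw [lettersL, List.count_append, List.count_cons]
      simp only [List.count_replicate]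
      rw [count_lettersL (b :: t)]
      simp

/-! ### the basis and projection -/

noncomputable def e' : W ≃ₐ[ℤ] MonoidAlgebra ℤ (FreeMonoid (Fin 2)) :=
  FreeAlgebra.equivMonoidAlgebraFreeMonoid

lemma e'_ι (x : Fin 2) : e' (FreeAlgebra.ι ℤ x) = MonoidAlgebra.single (FreeMonoid.of x) 1 := by
  simp [e', FreeAlgebra.equivMonoidAlgebraFreeMonoid]

noncomputable def bB : Module.Basis (FreeMonoid (Fin 2)) ℤ W := FreeAlgebra.basisFreeMonoid ℤ (Fin 2)

lemma bB_apply (w : FreeMonoid (Fin 2)) : bB w = e'.symm (MonoidAlgebra.single w 1) := by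
  simp only [bB, FreeAlgebra.basisFreeMonoid, e', Module.Basis.map_apply]
  rfl

lemma e'_prod (l : List (Fin 2)) :
    e' ((l.map (FreeAlgebra.ι ℤ)).prod) = MonoidAlgebra.single (FreeMonoid.ofList l) 1 := by
  induction l with
  | nil => simp; rfl
  | cons x t ih =>
      simp only [List.map_cons, List.prod_cons, map_mul, ih, e'_ι]
      rw [MonoidAlgebra.single_mul_single]
      simp

lemma bB_eq_prod (l : List (Fin 2)) :
    bB (FreeMonoid.ofList l) = (l.map (FreeAlgebra.ι ℤ)).prod := by
  rw [bB_apply, ← e'_prod, AlgEquiv.symm_apply_apply]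

/-- projection onto the span of words whose `y`-degree is `k - 1`. -/
noncomputable def projk (k : ℕ) : W →ₗ[ℤ] W :=
  bB.constr ℤ fun w => if (FreeMonoid.toList w).count 1 = k - 1 then bB w else 0

lemma projk_basis (k : ℕ) (w : FreeMonoid (Fin 2)) :
    projk k (bB w) = if (FreeMonoid.toList w).count 1 = k - 1 then bB w else 0 :=
  Module.Basis.constr_basis bB ℤ _ w

lemma projk_brl (k : ℕ) {L : List ℕ} (h : L ≠ []) :
    projk k (brl L) = if L.length - 1 = k - 1 then brl L else 0 := by
  rw [brl_eq_prod L h, ← bB_eq_prod, projk_basis]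
  rw [show FreeMonoid.toList (FreeMonoid.ofList (lettersL L)) = lettersL L from rfl]
  rw [count_lettersL]

lemma projk_br {k k' : ℕ} (hk : 0 < k) (hk' : 0 < k') (a : Fin k' → ℕ) :
    projk k (br a) = if k' = k then br a else 0 := by
  rw [br_eq_brl, projk_brl k (by simp [List.ofFn_eq_nil_iff]; omega)]
  simp only [List.length_ofFn]
  by_cases h : k' = k
  · rw [if_pos (by omega), if_pos h]
  · rw [if_neg (by omega), if_neg h]

/-! ### interleaving exponent lists -/

def fI : List ℕ → List (List ℕ) → List ℕ
  | [], _ => []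
  | a :: _, [] => [a]
  | a :: as, m :: ms => a :: (m ++ fI as ms)

lemma fI_ne_nil {as : List ℕ} (h : as ≠ []) (ms : List (List ℕ)) : fI as ms ≠ [] := by
  obtain ⟨a, t, rfl⟩ := List.exists_cons_of_ne_nil h
  cases ms <;> simp [fI]

lemma fI_sublist : ∀ (ms : List (List ℕ)) (as : List ℕ), as.length = ms.length + 1 →
    as.Sublist (fI as ms)
  | [], [], h => by simp at h
  | [], a :: t, h => by
      have : t = [] := by simpa using h
      subst this
      simp [fI]
  | m :: ms, [], h => by simp at h
  | m :: ms, a :: t, h => by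
      rw [fI]
      exact List.Sublist.cons₂ a
        ((fI_sublist ms t (by simpa using h)).trans (List.sublist_append_right m _))

def posI : ℕ → List (List ℕ) → ℕ
  | 0, _ => 0
  | _ + 1, [] => 0
  | i + 1, m :: ms => m.length + 1 + posI i ms

lemma fI_set {v : ℕ} : ∀ (ms : List (List ℕ)) (as : List ℕ) (i : ℕ), i < ms.length + 1 →
    fI (as.set i v) ms = (fI as ms).set (posI i ms) v
  | ms, [], i, _ => by simp [fI]
  | [], a :: as, 0, _ => by simp [fI, posI]
  | [], a :: as, i + 1, h => by simp at h
  | m :: ms, a :: as, 0, _ => by simp [fI, posI]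
  | m :: ms, a :: as, i + 1, h => by
      have hh : i < ms.length + 1 := by simp at h; omega
      rw [List.set_cons_succ, fI, fI, posI,
        show m.length + 1 + posI i ms = (m.length + posI i ms) + 1 from by omega,
        List.set_cons_succ, fI_set ms as i hh]
      rw [List.set_append_right _ _ (by omega)]
      rw [show m.length + posI i ms - m.length = posI i ms from by omega]

lemma posI_lt : ∀ (ms : List (List ℕ)) (as : List ℕ) (i : ℕ), as.length = ms.length + 1 →
    i < as.length → posI i ms < (fI as ms).length
  | [], [], i, h, hi => by simp at h
  | [], a :: t, i, h, hi => by
      have : t = [] := by simpa using h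
      subst this
      have : i = 0 := by simp at hi; omega
      subst this
      simp [fI, posI]
  | m :: ms, [], i, h, hi => by simp at h
  | m :: ms, a :: t, 0, h, hi => by simp [fI, posI]
  | m :: ms, a :: t, i + 1, h, hi => by
      have := posI_lt ms t i (by simpa using h) (by simpa using hi)
      simp only [fI, posI, List.length_cons, List.length_append]
      omega

lemma posI_strictMono : ∀ (ms : List (List ℕ)) (i j : ℕ), i < j → j ≤ ms.length →
    posI i ms < posI j ms
  | ms, i, 0, h, _ => by omega
  | [], i, j + 1, h, hj => by simp at hj
  | m :: ms, 0, j + 1, h, hj => by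
      have : 0 ≤ posI j ms := Nat.zero_le _
      simp only [posI]
      omega
  | m :: ms, i + 1, j + 1, h, hj => by
      have := posI_strictMono ms i j (by omega) (by simpa using hj)
      simp only [posI]
      omega

lemma posI_ne {ms : List (List ℕ)} {i j : ℕ} (hij : i ≠ j) (hi : i ≤ ms.length)
    (hj : j ≤ ms.length) : posI i ms ≠ posI j ms := by
  rcases lt_trichotomy i j with h | h | h
  · exact (posI_strictMono ms i j h hj).ne
  · exact absurd h hij
  · exact (posI_strictMono ms j i h hi).ne'

lemma fI_get (ms : List (List ℕ)) (as : List ℕ) (i : ℕ) (h : as.length = ms.length + 1)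
    (hi : i < as.length) (hp : posI i ms < (fI as ms).length) :
    (fI as ms)[posI i ms] = as[i] := by
  have h1 : as.set i as[i] = as := by
    apply List.ext_getElem
    · simp
    · intro t ht1 ht2
      simp [List.getElem_set]
  have h2 : fI as ms = (fI as ms).set (posI i ms) as[i] := by
    conv_lhs => rw [← h1]
    rw [fI_set ms as i (by omega)]
  rw [List.getElem_of_eq h2, List.getElem_set_self]

lemma interleave_fI : ∀ (ms : List (List ℕ)) (as : List ℕ), as.length = ms.length + 1 →
    interleave (as.map (Xg ^ ·)) (ms.map fun m => brl (0 :: (m ++ [0]))) = brl (fI as ms)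
  | [], [], h => by simp at h
  | [], a :: t, h => by
      have : t = [] := by simpa using h
      subst this
      simp [interleave, fI, brl_single]
  | m :: ms, [], h => by simp at h
  | m :: ms, a :: t, h => by
      have ht : t ≠ [] := by
        rintro rfl
        simp at h
      rw [List.map_cons, List.map_cons, interleave, interleave_fI ms t (by simpa using h), fI,
        brl_cons 0 (by simp), pow_zero, one_mul, mul_assoc, mul_assoc,
        brl_append_zero m (fI_ne_nil ht ms),
        brl_cons a (by simp [fI_ne_nil ht ms])]

lemma ofFn_comp_swap {α : Type*} {k : ℕ} (c : Fin k → α) (i j : Fin k) :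
    List.ofFn (c ∘ Equiv.swap i j) = ((List.ofFn c).set i (c j)).set j (c i) := by
  apply List.ext_getElem
  · simp
  intro t h1 h2
  have hl : t < k := by simpa using h1
  simp only [List.getElem_ofFn, Function.comp_apply, List.getElem_set]
  rcases eq_or_ne (j : ℕ) t with hj | hj
  · rw [if_pos hj]
    have : (⟨t, hl⟩ : Fin k) = j := Fin.ext hj.symm
    rw [this, Equiv.swap_apply_right]
  · rw [if_neg hj]
    rcases eq_or_ne (i : ℕ) t with hi | hi
    · rw [if_pos hi]
      have : (⟨t, hl⟩ : Fin k) = i := Fin.ext hi.symm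
      rw [this, Equiv.swap_apply_left]
    · rw [if_neg hi, Equiv.swap_apply_of_ne_of_ne
        (fun hc => hi (by rw [← hc]))
        (fun hc => hj (by rw [← hc]))]

lemma brl_get (L : List ℕ) : brl L = br L.get := by
  rw [br_eq_brl, List.ofFn_get]

lemma br_get_swap (L : List ℕ) (P Q : Fin L.length) :
    br (L.get ∘ Equiv.swap P Q) = brl ((L.set P (L.get Q)).set Q (L.get P)) := by
  rw [br_eq_brl, ofFn_comp_swap, List.ofFn_get]

/-! ### parsing monomials -/

def expsI : List (Fin 2) → List ℕ
  | [] => [0]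
  | c :: t =>
      if c = 1 then 0 :: expsI t
      else
        match expsI t with
        | [] => []
        | a :: r => (a + 1) :: r

lemma expsI_ne_nil : ∀ ℓ : List (Fin 2), expsI ℓ ≠ []
  | [] => by simp [expsI]
  | c :: t => by
      rw [expsI]
      split
      · simp
      · have h0 := expsI_ne_nil t
        split
        next heq => exact absurd heq h0
        next => simp

lemma fin2_cases (c : Fin 2) : c = 0 ∨ c = 1 := by omega

lemma brl_expsI : ∀ ℓ : List (Fin 2), brl (expsI ℓ) = (ℓ.map (FreeAlgebra.ι ℤ)).prod
  | [] => by simp [expsI, brl_single]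
  | c :: t => by
      rcases fin2_cases c with rfl | rfl
      · rw [show expsI (0 :: t) = match expsI t with
            | [] => []
            | a :: r => (a + 1) :: r from by rw [expsI]; norm_num]
        obtain ⟨a, r, har⟩ := List.exists_cons_of_ne_nil (expsI_ne_nil t)
        rw [har]
        have ih := brl_expsI t
        rw [har] at ih
        rw [List.map_cons, List.prod_cons, ← ih]
        cases r with
        | nil =>
            rw [brl_single, brl_single, pow_succ']
            rfl
        | cons b s =>
            rw [brl_cons (a + 1) (by simp), brl_cons a (by simp), pow_succ']
            simp [Xg, mul_assoc]
      · rw [show expsI (1 :: t) = 0 :: expsI t from by rw [expsI]; norm_num,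
          brl_cons 0 (expsI_ne_nil t), pow_zero, one_mul, brl_expsI t, List.map_cons,
          List.prod_cons]
        rfl

lemma expsI_cons_one (t : List (Fin 2)) : expsI (1 :: t) = 0 :: expsI t := by
  rw [expsI]; norm_num

lemma expsI_cons_zero (t : List (Fin 2)) : expsI (0 :: t) =
    match expsI t with
    | [] => []
    | a :: r => (a + 1) :: r := by
  rw [expsI]; norm_num

lemma expsI_len : ∀ t : List (Fin 2), (1 : Fin 2) ∈ t → 2 ≤ (expsI t).length
  | [], h => by simp at h
  | c :: t, h => by
      rcases fin2_cases c with rfl | rfl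
      · have h1 : (1 : Fin 2) ∈ t := by
          rcases List.mem_cons.mp h with h' | h'
          · exact absurd h'.symm (by decide)
          · exact h'
        have := expsI_len t h1
        rw [expsI_cons_zero]
        obtain ⟨a, r, har⟩ := List.exists_cons_of_ne_nil (expsI_ne_nil t)
        rw [har] at this ⊢
        simpa using this
      · rw [expsI_cons_one]
        have := List.length_pos_iff.mpr (expsI_ne_nil t)
        simp only [List.length_cons]
        omega

lemma expsI_getLast? : ∀ ℓ : List (Fin 2), (ℓ.getLast? = some 1 ∨ ℓ = []) →
    (expsI ℓ).getLast? = some 0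
  | [], _ => by simp [expsI]
  | [c], h => by
      have hc : c = 1 := by
        rcases h with h | h
        · simpa using h
        · simp at h
      subst hc
      rw [expsI_cons_one]
      simp [expsI]
  | c :: d :: t, h => by
      have h1 : (d :: t).getLast? = some 1 := by
        rcases h with h | h
        · rwa [List.getLast?_cons_cons] at h
        · simp at h
      have ih := expsI_getLast? (d :: t) (Or.inl h1)
      obtain ⟨a, r, har⟩ := List.exists_cons_of_ne_nil (expsI_ne_nil (d :: t))
      rcases fin2_cases c with rfl | rfl
      · rw [expsI_cons_zero, har]
        cases r with
        | nil =>
            have hmem : (1 : Fin 2) ∈ d :: t := List.mem_of_getLast? h1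
            have := expsI_len (d :: t) hmem
            rw [har] at this
            simp at this
        | cons b s =>
            rw [har] at ih
            rw [List.getLast?_cons_cons]
            rwa [List.getLast?_cons_cons] at ih
      · rw [expsI_cons_one, har, List.getLast?_cons_cons, ← har]
        exact ih

/-! ### first and last letters -/

lemma head_of_mul_Yg {z : W} (hz : z ∈ Zsub) {l : List (Fin 2)} (hl : l ≠ [])
    (h : (l.map (FreeAlgebra.ι ℤ)).prod = Yg * z) : l.head? = some 1 := by
  classical
  set S : Set (FreeMonoid (Fin 2)) := {w | (FreeMonoid.toList w).head? = some 1} with hSdef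
  have key : ∀ v ∈ Zsub, bB.repr (Yg * v) ∈ Finsupp.supported ℤ ℤ S := by
    intro v hv
    refine Submodule.span_induction (fun w hw => ?_) ?_ (fun x y _ _ hx hy => ?_)
      (fun c x _ hx => ?_) hv
    · obtain ⟨l', hl', rfl⟩ := hw
      have : Yg * (l'.map (FreeAlgebra.ι ℤ)).prod = ((1 :: l').map (FreeAlgebra.ι ℤ)).prod := by
        simp [Yg]
      rw [this, ← bB_eq_prod, Module.Basis.repr_self]
      rw [Finsupp.mem_supported, Finsupp.support_single_ne_zero _ one_ne_zero]
      intro w hw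
      simp only [Finset.coe_singleton, Set.mem_singleton_iff] at hw
      subst hw
      show (FreeMonoid.toList (FreeMonoid.ofList (1 :: l'))).head? = some 1
      rfl
    · simp only [mul_zero, map_zero]
      exact Submodule.zero_mem _
    · rw [mul_add, map_add]
      exact Submodule.add_mem _ hx hy
    · rw [mul_smul_comm, map_smul]
      exact Submodule.smul_mem _ _ hx
  have h1 := key z hz
  rw [← h, ← bB_eq_prod, Module.Basis.repr_self, Finsupp.mem_supported] at h1
  have h2 : FreeMonoid.ofList l ∈ S := by
    apply h1
    rw [Finsupp.support_single_ne_zero _ one_ne_zero]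
    simp
  simpa [hSdef] using h2

lemma last_of_mul_Yg {z : W} (hz : z ∈ Zsub) {l : List (Fin 2)} (hl : l ≠ [])
    (h : (l.map (FreeAlgebra.ι ℤ)).prod = z * Yg) : l.getLast? = some 1 := by
  classical
  set S : Set (FreeMonoid (Fin 2)) := {w | (FreeMonoid.toList w).getLast? = some 1} with hSdef
  have key : ∀ v ∈ Zsub, bB.repr (v * Yg) ∈ Finsupp.supported ℤ ℤ S := by
    intro v hv
    refine Submodule.span_induction (fun w hw => ?_) ?_ (fun x y _ _ hx hy => ?_)
      (fun c x _ hx => ?_) hv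
    · obtain ⟨l', hl', rfl⟩ := hw
      have : (l'.map (FreeAlgebra.ι ℤ)).prod * Yg = ((l' ++ [1]).map (FreeAlgebra.ι ℤ)).prod := by
        simp [Yg]
      rw [this, ← bB_eq_prod, Module.Basis.repr_self]
      rw [Finsupp.mem_supported, Finsupp.support_single_ne_zero _ one_ne_zero]
      intro w hw
      simp only [Finset.coe_singleton, Set.mem_singleton_iff] at hw
      subst hw
      show (FreeMonoid.toList (FreeMonoid.ofList (l' ++ [1]))).getLast? = some 1
      rw [show FreeMonoid.toList (FreeMonoid.ofList (l' ++ [1])) = l' ++ [1] from rfl]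
      exact List.getLast?_concat
    · simp only [zero_mul, map_zero]
      exact Submodule.zero_mem _
    · rw [add_mul, map_add]
      exact Submodule.add_mem _ hx hy
    · rw [smul_mul_assoc, map_smul]
      exact Submodule.smul_mem _ _ hx
  have h1 := key z hz
  rw [← h, ← bB_eq_prod, Module.Basis.repr_self, Finsupp.mem_supported] at h1
  have h2 : FreeMonoid.ofList l ∈ S := by
    apply h1
    rw [Finsupp.support_single_ne_zero _ one_ne_zero]
    simp
  simpa [hSdef] using h2

/-- any admissible separator `u` equals `brl (0 :: m ++ [0])`. -/
lemma parse_u {v : W} (hmono : IsMonoW v)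
    (h : v = Yg ∨ ((∃ z ∈ Zsub, v = Yg * z) ∧ ∃ z ∈ Zsub, v = z * Yg)) :
    ∃ m : List ℕ, v = brl (0 :: (m ++ [0])) := by
  rcases h with rfl | ⟨⟨z1, hz1, he1⟩, ⟨z2, hz2, he2⟩⟩
  · refine ⟨[], ?_⟩
    rw [List.nil_append, brl_cons 0 (by simp), brl_single]
    simp
  · obtain ⟨l, hl, rfl⟩ := hmono
    have hh : l.head? = some 1 := head_of_mul_Yg hz1 hl he1
    have ht : l.getLast? = some 1 := last_of_mul_Yg hz2 hl he2
    obtain ⟨c, t, rfl⟩ := List.exists_cons_of_ne_nil hl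
    have hc : c = 1 := by simpa using hh
    subst hc
    have h1 : (expsI t).getLast? = some 0 := by
      apply expsI_getLast?
      cases t with
      | nil => exact Or.inr rfl
      | cons d s =>
          left
          rwa [List.getLast?_cons_cons] at ht
    obtain ⟨m, hm⟩ := List.getLast?_eq_some_iff.mp h1
    refine ⟨m, ?_⟩
    rw [← brl_expsI, expsI_cons_one, hm]

/-! ### membership criteria for `Bsub` -/

lemma mem_B_of_ge {n : ℕ} {L : List ℕ} (h : ∃ x ∈ L, n ≤ x) : brl L ∈ Bsub n := by
  apply Submodule.subset_span
  left
  obtain ⟨x, hx, hnx⟩ := h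
  obtain ⟨t, ht, rfl⟩ := List.mem_iff_getElem.mp hx
  exact ⟨L.length, L.get, by omega,
    Or.inl ⟨⟨t, ht⟩, by simpa [List.get_eq_getElem] using hnx⟩, brl_get L⟩

lemma mem_B_of_dup {n : ℕ} {L : List ℕ} (h : ¬ L.Nodup) : brl L ∈ Bsub n := by
  apply Submodule.subset_span
  left
  have h2 : ¬ Function.Injective L.get := fun hinj => h (List.nodup_iff_injective_get.mpr hinj)
  obtain ⟨t, s, hts, hne⟩ := Function.not_injective_iff.mp h2
  exact ⟨L.length, L.get, t.pos, Or.inr ⟨t, s, hne, hts⟩, brl_get L⟩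

lemma mem_B_swap {n : ℕ} {L : List ℕ} {p q : ℕ} (hp : p < L.length) (hq : q < L.length)
    (hpq : p ≠ q) :
    brl L + brl ((L.set p (L.get ⟨q, hq⟩)).set q (L.get ⟨p, hp⟩)) ∈ Bsub n := by
  apply Submodule.subset_span
  right
  exact ⟨L.length, L.get, ⟨p, hp⟩, ⟨q, hq⟩, Fin.ne_of_val_ne hpq,
    by rw [brl_get L, br_get_swap]⟩

/-- **Lemma 2 (iii)**: let `k ≥ 1` and let `u_1,…,u_{k−1} ∈ M` be monomials with
`u_i ∈ yZ ∩ Zy` or `u_i = y`.  Then any `ℤ`-linear map `T` with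
`T([a_1,…,a_k]) = x^{a_1} u_1 x^{a_2} u_2 ⋯ u_{k−1} x^{a_k}` maps `B ∩ Z(k)` into `B`. -/
theorem B_image_under_substitution (n : ℕ) (hn : 0 < n) (k : ℕ) (hk : 0 < k)
    (u : Fin (k - 1) → W)
    (hu : ∀ i, IsMonoW (u i) ∧
      (u i = Yg ∨ ((∃ z ∈ Zsub, u i = Yg * z) ∧ ∃ z ∈ Zsub, u i = z * Yg)))
    (T : W →ₗ[ℤ] W) (hT : ∀ a : Fin k → ℕ, T (br a) = altWord a u) :
    ∀ w ∈ Bsub n ⊓ Zk k, T w ∈ Bsub n := by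
  classical
  have hparse : ∀ i, ∃ m : List ℕ, u i = brl (0 :: (m ++ [0])) :=
    fun i => parse_u (hu i).1 (hu i).2
  choose M hM using hparse
  set msl : List (List ℕ) := List.ofFn M with hmsl
  have hmsllen : msl.length = k - 1 := by simp [hmsl]
  have hlen : ∀ a : Fin k → ℕ, (List.ofFn a).length = msl.length + 1 := by
    intro a
    simp only [List.length_ofFn, hmsllen]
    omega
  have hTa : ∀ a : Fin k → ℕ, T (br a) = brl (fI (List.ofFn a) msl) := by
    intro a
    rw [hT a, altWord]
    have e1 : (List.ofFn fun i => Xg ^ a i) = (List.ofFn a).map (Xg ^ ·) := by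
      rw [List.map_ofFn]
      rfl
    have e2 : List.ofFn u = msl.map fun m => brl (0 :: (m ++ [0])) := by
      rw [hmsl, List.map_ofFn]
      congr 1
      funext i
      exact hM i
    rw [e1, e2, interleave_fI msl _ (hlen a)]
  have main : ∀ v ∈ Bsub n, T (projk k v) ∈ Bsub n := by
    intro v hv
    refine Submodule.span_induction (fun w hw => ?_) ?_ (fun x y _ _ hx hy => ?_)
      (fun c x _ hx => ?_) hv
    · rcases hw with hw | hw
      · obtain ⟨k', a, hk', hcond, rfl⟩ := hw
        rw [projk_br hk hk' a]
        by_cases hkk : k' = k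
        · subst hkk
          rw [if_pos rfl, hTa a]
          have hofn : (List.ofFn a) ≠ [] := by
            simp only [ne_eq, List.ofFn_eq_nil_iff]
            omega
          have hsub : (List.ofFn a).Sublist (fI (List.ofFn a) msl) := fI_sublist msl _ (hlen a)
          rcases hcond with ⟨i, hi⟩ | ⟨i, j, hij, hij2⟩
          · exact mem_B_of_ge ⟨a i, hsub.subset (List.mem_ofFn.mpr ⟨i, rfl⟩), hi⟩
          · apply mem_B_of_dup
            intro hnd
            exact hij (List.nodup_ofFn.mp (hnd.sublist hsub) hij2)
        · rw [if_neg hkk, map_zero]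
          exact Submodule.zero_mem _
      · obtain ⟨k', a, i, j, hij, rfl⟩ := hw
        have hk' : 0 < k' := i.pos
        rw [map_add, projk_br hk hk' a, projk_br hk hk' (a ∘ Equiv.swap i j)]
        by_cases hkk : k' = k
        · subst hkk
          rw [if_pos rfl, if_pos rfl, map_add, hTa a, hTa (a ∘ Equiv.swap i j)]
          set L := fI (List.ofFn a) msl with hLdef
          set p := posI i.val msl with hpdef
          set q := posI j.val msl with hqdef
          have hp : p < L.length := posI_lt msl _ i.val (hlen a) (by simpa using i.isLt)
          have hq : q < L.length := posI_lt msl _ j.val (hlen a) (by simpa using j.isLt)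
          have hpq : p ≠ q := posI_ne (Fin.val_ne_of_ne hij)
            (by have := i.isLt; omega) (by have := j.isLt; omega)
          have hgi : L.get ⟨p, hp⟩ = a i := by
            have h0 := fI_get msl (List.ofFn a) i.val (hlen a) (by simpa using i.isLt)
              (posI_lt msl _ i.val (hlen a) (by simpa using i.isLt))
            simp only [List.getElem_ofFn, Fin.eta] at h0
            simpa [List.get_eq_getElem] using h0
          have hgj : L.get ⟨q, hq⟩ = a j := by
            have h0 := fI_get msl (List.ofFn a) j.val (hlen a) (by simpa using j.isLt)
              (posI_lt msl _ j.val (hlen a) (by simpa using j.isLt))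
            simp only [List.getElem_ofFn, Fin.eta] at h0
            simpa [List.get_eq_getElem] using h0
          have hL' : fI (List.ofFn (a ∘ Equiv.swap i j)) msl = (L.set p (a j)).set q (a i) := by
            rw [ofFn_comp_swap a i j,
              fI_set msl _ j.val (by have := j.isLt; omega),
              fI_set msl _ i.val (by have := i.isLt; omega)]
          rw [hL', ← hgi, ← hgj]
          exact mem_B_swap hp hq hpq
        · rw [if_neg hkk, if_neg hkk, add_zero, map_zero]
          exact Submodule.zero_mem _
    · rw [map_zero, map_zero]
      exact Submodule.zero_mem _
    · rw [map_add, map_add]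
      exact Submodule.add_mem _ hx hy
    · rw [map_smul, map_smul]
      exact Submodule.smul_mem _ _ hx
  intro w hw
  obtain ⟨hwB, hwZ⟩ := hw
  have hfix : projk k w = w := by
    refine Submodule.span_induction (fun v hv => ?_) (map_zero _)
      (fun x y _ _ hx hy => by rw [map_add, hx, hy])
      (fun c x _ hx => by rw [map_smul, hx]) hwZ
    obtain ⟨a, rfl⟩ := hv
    rw [projk_br hk hk a, if_pos rfl]
  have := main w hwB
  rwa [hfix] at this
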